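/- Let μ be a finite positive Borel measure on [0, 2π] and suppose Σ = ∫ (I − e^{iθ}A)⁻¹ B B* ((I − e^{iθ}A)⁻¹)* dμ(θ). Then there exists a 1×n complex row vector L such that Σ − A Σ A* = B L + (B L)*. -/

import Mathlib

open Matrix MeasureTheory

private lemma aux_isUnit {n : ℕ} (A : Matrix (Fin n) (Fin n) ℂ)
    (hA : ∀ μ ∈ spectrum ℂ A, ‖μ‖ < 1) (θ : ℝ) :
    IsUnit (1 - Complex.exp (θ * Complex.I) • A) := by
  set z : ℂ := Complex.exp (θ * Complex.I) with hz
  have hz0 : z ≠ 0 := Complex.exp_ne_zero _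
  have hznorm : ‖z‖ = 1 := by
    simp [hz, Complex.norm_exp]
  have hmem : (z⁻¹ : ℂ) ∉ spectrum ℂ A := by
    intro h
    have := hA _ h
    rw [norm_inv, hznorm] at this
    norm_num at this
  have h1 : IsUnit (algebraMap ℂ (Matrix (Fin n) (Fin n) ℂ) z⁻¹ - A) :=
    spectrum.notMem_iff.mp hmem
  have h2 : (1 : Matrix (Fin n) (Fin n) ℂ) - z • A
      = algebraMap ℂ (Matrix (Fin n) (Fin n) ℂ) z *
        (algebraMap ℂ (Matrix (Fin n) (Fin n) ℂ) z⁻¹ - A) := by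
    rw [mul_sub, ← _root_.map_mul, mul_inv_cancel₀ hz0, _root_.map_one]
    rw [Algebra.algebraMap_eq_smul_one, smul_mul_assoc, one_mul]
  rw [h2]
  exact ((isUnit_iff_ne_zero.mpr hz0).map _).mul h1

private lemma aux_exp_mul_star (θ : ℝ) :
    Complex.exp (θ * Complex.I) * star (Complex.exp (θ * Complex.I)) = 1 := by
  rw [Complex.star_def, ← Complex.exp_conj, ← Complex.exp_add]
  simp [Complex.conj_I, Complex.conj_ofReal, mul_comm]

private lemma aux_key {n : ℕ} (A C M R : Matrix (Fin n) (Fin n) ℂ) (z : ℂ)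
    (hC : Cᴴ = C) (hzz : z * star z = 1)
    (hMR : M * R = 1) (hM : M = 1 - z • A) :
    R * C * Rᴴ - A * (R * C * Rᴴ) * Aᴴ
      = (C * Rᴴ - (2⁻¹ : ℂ) • C) + (C * Rᴴ - (2⁻¹ : ℂ) • C)ᴴ := by
  have hAR : z • (A * R) = R - 1 := by
    have := hMR
    rw [hM, sub_mul, one_mul, smul_mul_assoc] at this
    linear_combination (norm := module) -this
  have key : A * (R * C * Rᴴ) * Aᴴ = (R - 1) * C * (R - 1)ᴴ := by
    rw [← hAR]
    simp only [conjTranspose_smul, smul_mul_assoc, mul_smul_comm, smul_smul]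
    rw [mul_comm (star z) z, hzz, one_smul, conjTranspose_mul]
    noncomm_ring
  rw [key]
  have hstar : star (2⁻¹ : ℂ) = (2⁻¹ : ℂ) := by norm_num
  simp only [conjTranspose_mul, conjTranspose_sub, conjTranspose_smul, conjTranspose_one,
    conjTranspose_conjTranspose, hC, hstar, sub_mul, mul_sub, one_mul, mul_one, mul_smul_comm,
    smul_mul_assoc, mul_assoc]
  module

/-- If `S = ∫ (I − e^{iθ}A)⁻¹ B B* ((I − e^{iθ}A)⁻¹)* dμ(θ)` for a finite
positive measure `μ` on `[0,2π]`, then there exists a row vector `L` such that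
`S − A S A* = B L + (B L)*`. -/
theorem state_covariance_displacement
    {n : ℕ} (hn : 1 ≤ n)
    (A : Matrix (Fin n) (Fin n) ℂ) (B : Matrix (Fin n) (Fin 1) ℂ)
    (hA : ∀ μ ∈ spectrum ℂ A, ‖μ‖ < 1)
    (μ : Measure ℝ) [IsFiniteMeasure μ]
    (S : Matrix (Fin n) (Fin n) ℂ)
    (hS : S = Matrix.of fun i j =>
      ∫ θ in Set.Icc (0:ℝ) (2 * Real.pi),
        (((1 - Complex.exp (θ * Complex.I) • A)⁻¹ * B * Bᴴ *
          ((1 - Complex.exp (θ * Complex.I) • A)⁻¹)ᴴ :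
          Matrix (Fin n) (Fin n) ℂ) i j) ∂μ) :
    ∃ L : Matrix (Fin 1) (Fin n) ℂ, S - A * S * Aᴴ = B * L + (B * L)ᴴ := by
  classical
  set T : Set ℝ := Set.Icc (0:ℝ) (2 * Real.pi) with hT
  set z : ℝ → ℂ := fun θ => Complex.exp (θ * Complex.I) with hzdef
  set M : ℝ → Matrix (Fin n) (Fin n) ℂ := fun θ => 1 - z θ • A with hMdef
  set R : ℝ → Matrix (Fin n) (Fin n) ℂ := fun θ => (M θ)⁻¹ with hRdef
  set F : ℝ → Matrix (Fin n) (Fin n) ℂ := fun θ => R θ * B * Bᴴ * (R θ)ᴴ with hFdef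
  set Lf : ℝ → Matrix (Fin 1) (Fin n) ℂ :=
    fun θ => Bᴴ * (R θ)ᴴ - (2⁻¹ : ℂ) • Bᴴ with hLfdef
  have hunit : ∀ θ : ℝ, IsUnit (M θ) := fun θ => aux_isUnit A hA θ
  have hMR : ∀ θ : ℝ, M θ * R θ = 1 := fun θ =>
    Matrix.mul_nonsing_inv _ ((Matrix.isUnit_iff_isUnit_det _).mp (hunit θ))
  have key : ∀ θ : ℝ, F θ - A * F θ * Aᴴ = B * Lf θ + (B * Lf θ)ᴴ := by
    intro θ
    have h := aux_key A (B * Bᴴ) (M θ) (R θ) (z θ)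
      (by rw [conjTranspose_mul, conjTranspose_conjTranspose])
      (aux_exp_mul_star θ) (hMR θ) rfl
    have hBLf : B * Lf θ = B * Bᴴ * (R θ)ᴴ - (2⁻¹ : ℂ) • (B * Bᴴ) := by
      show B * (Bᴴ * (R θ)ᴴ - (2⁻¹ : ℂ) • Bᴴ) = _
      rw [Matrix.mul_sub, Matrix.mul_smul, Matrix.mul_assoc]
    have hFe : F θ = R θ * (B * Bᴴ) * (R θ)ᴴ := by
      show R θ * B * Bᴴ * (R θ)ᴴ = _
      rw [Matrix.mul_assoc (R θ) B Bᴴ]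
    rw [hBLf, hFe, h]
  -- continuity
  have hzcont : Continuous z :=
    Complex.continuous_exp.comp (Complex.continuous_ofReal.mul continuous_const)
  have hMcont : Continuous M := continuous_const.sub (hzcont.smul continuous_const)
  have hdetne : ∀ θ : ℝ, (M θ).det ≠ 0 := fun θ =>
    ((Matrix.isUnit_iff_isUnit_det _).mp (hunit θ)).ne_zero
  have hRcont : Continuous R := by
    have hre : R = fun θ => ((M θ).det)⁻¹ • (M θ).adjugate := by
      funext θ
      show (M θ)⁻¹ = ((M θ).det)⁻¹ • (M θ).adjugate
      rw [Matrix.inv_def, Ring.inverse_eq_inv']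
    rw [hre]
    exact (hMcont.matrix_det.inv₀ hdetne).smul hMcont.matrix_adjugate
  have hFcont : Continuous F :=
    ((hRcont.matrix_mul continuous_const).matrix_mul continuous_const).matrix_mul
      hRcont.matrix_conjTranspose
  have hLfcont : Continuous Lf :=
    (continuous_const.matrix_mul hRcont.matrix_conjTranspose).sub continuous_const
  have hAFcont : Continuous (fun θ => A * F θ * Aᴴ) :=
    (continuous_const.matrix_mul hFcont).matrix_mul continuous_const
  have hBLcont : Continuous (fun θ => B * Lf θ) := continuous_const.matrix_mul hLfcont
  -- integrability
  have hFint : ∀ k l, IntegrableOn (fun θ => F θ k l) T μ := fun k l =>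
    (hFcont.matrix_elem k l).integrableOn_Icc
  have hAFint : ∀ k l, IntegrableOn (fun θ => (A * F θ * Aᴴ) k l) T μ := fun k l =>
    (hAFcont.matrix_elem k l).integrableOn_Icc
  have hBLint : ∀ k l, IntegrableOn (fun θ => (B * Lf θ) k l) T μ := fun k l =>
    (hBLcont.matrix_elem k l).integrableOn_Icc
  have hBLstarint : ∀ k l, IntegrableOn (fun θ => star ((B * Lf θ) k l)) T μ := fun k l =>
    ((continuous_star.comp (hBLcont.matrix_elem k l)).integrableOn_Icc)
  -- entries of S
  have hSij : ∀ k l, S k l = ∫ θ in T, F θ k l ∂μ := by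
    intro k l
    rw [hS]
    rfl
  refine ⟨Matrix.of fun a b => ∫ θ in T, Lf θ a b ∂μ, ?_⟩
  ext i j
  have hASA : (A * S * Aᴴ) i j = ∫ θ in T, (A * F θ * Aᴴ) i j ∂μ := by
    have h1 : ∀ θ : ℝ, (A * F θ * Aᴴ) i j = ∑ l, ∑ k, A i k * F θ k l * Aᴴ l j := by
      intro θ
      simp [Matrix.mul_apply, Finset.sum_mul]
    have h2 : (A * S * Aᴴ) i j = ∑ l, ∑ k, A i k * S k l * Aᴴ l j := by
      simp [Matrix.mul_apply, Finset.sum_mul]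
    have hg : ∀ (l k : Fin n),
        Integrable (fun θ => A i k * F θ k l * Aᴴ l j) (μ.restrict T) := fun l k =>
      ((hFint k l).const_mul _).mul_const _
    rw [h2]
    calc ∑ l, ∑ k, A i k * S k l * Aᴴ l j
        = ∑ l, ∑ k, ∫ θ in T, A i k * F θ k l * Aᴴ l j ∂μ := by
          refine Finset.sum_congr rfl fun l _ => Finset.sum_congr rfl fun k _ => ?_
          rw [hSij k l, ← MeasureTheory.integral_const_mul,
            ← MeasureTheory.integral_mul_const]
      _ = ∫ θ in T, ∑ l, ∑ k, A i k * F θ k l * Aᴴ l j ∂μ := by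
          rw [MeasureTheory.integral_finset_sum _
            (fun l _ => integrable_finset_sum _ (fun k _ => hg l k))]
          exact Finset.sum_congr rfl fun l _ =>
            (MeasureTheory.integral_finset_sum _ (fun k _ => hg l k)).symm
      _ = ∫ θ in T, (A * F θ * Aᴴ) i j ∂μ := by
          refine integral_congr_ae (Filter.Eventually.of_forall fun θ => ?_)
          exact (h1 θ).symm
  have hLHS : (S - A * S * Aᴴ) i j = ∫ θ in T, (F θ - A * F θ * Aᴴ) i j ∂μ := by
    simp only [Matrix.sub_apply]
    rw [hSij i j, hASA, ← MeasureTheory.integral_sub (hFint i j) (hAFint i j)]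
  have hBL : ∀ a b, (B * Matrix.of fun a b => ∫ θ in T, Lf θ a b ∂μ) a b
      = ∫ θ in T, (B * Lf θ) a b ∂μ := by
    intro a b
    simp only [Matrix.mul_apply, Fin.sum_univ_one, Matrix.of_apply]
    rw [← MeasureTheory.integral_const_mul]
  have hRHS : (B * Matrix.of (fun a b => ∫ θ in T, Lf θ a b ∂μ)
      + (B * Matrix.of (fun a b => ∫ θ in T, Lf θ a b ∂μ))ᴴ) i j
      = ∫ θ in T, (B * Lf θ + (B * Lf θ)ᴴ) i j ∂μ := by
    simp only [Matrix.add_apply, Matrix.conjTranspose_apply]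
    rw [hBL i j, hBL j i]
    rw [show (star (∫ θ in T, (B * Lf θ) j i ∂μ))
        = ∫ θ in T, star ((B * Lf θ) j i) ∂μ from (integral_conj).symm]
    rw [← MeasureTheory.integral_add (hBLint i j) (hBLstarint j i)]
  rw [hLHS, hRHS]
  refine integral_congr_ae (Filter.Eventually.of_forall fun θ => ?_)
  show (F θ - A * F θ * Aᴴ) i j = (B * Lf θ + (B * Lf θ)ᴴ) i j
  rw [key θ]
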